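/- Let f₁ : [0,1] → ℝ be continuous with ∫₀¹ x f₁(x) dx = 1. Then for every complex σ with Re σ > −1 and σ ≠ 1, the identity (σ/(σ−1)) F₁(σ) − 1/(σ−1) = F₃(σ) holds, where F₁(σ) = ∫₀¹ t^σ f₁(t) dt and F₃(σ) = ∫₀¹ t^σ f₃(t) dt. -/

import Mathlib

open MeasureTheory intervalIntegral Set Filter Topology

lemma aux_integrable {g : ℝ → ℂ} (hg : ContinuousOn g (Set.Ioc 0 1)) {D r : ℝ} (hr : -1 < r)
    (hb : ∀ t ∈ Set.Ioc (0:ℝ) 1, ‖g t‖ ≤ D * t ^ r) :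
    IntervalIntegrable g MeasureTheory.volume 0 1 := by
  rw [intervalIntegrable_iff_integrableOn_Ioc_of_le (by norm_num : (0:ℝ) ≤ 1)]
  have hint : IntegrableOn (fun t : ℝ => D * t ^ r) (Set.Ioc 0 1) := by
    have := (intervalIntegral.intervalIntegrable_rpow' (a := 0) (b := 1) hr).const_mul D
    rwa [intervalIntegrable_iff_integrableOn_Ioc_of_le (by norm_num : (0:ℝ) ≤ 1)] at this
  refine hint.mono' (hg.aestronglyMeasurable measurableSet_Ioc) ?_
  filter_upwards [ae_restrict_mem measurableSet_Ioc] with t ht using hb t ht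

theorem stmt8 (f₁ : ℝ → ℝ) (hf₁ : ContinuousOn f₁ (Set.Icc 0 1))
    (hnorm : ∫ x in (0:ℝ)..1, x * f₁ x = 1)
    (σ : ℂ) (hσ : -1 < σ.re) (hσ1 : σ ≠ 1) :
    (σ / (σ - 1)) * (∫ t in (0:ℝ)..1, (t : ℂ) ^ σ * (f₁ t : ℂ)) - 1 / (σ - 1) =
      ∫ t in (0:ℝ)..1,
        (t : ℂ) ^ σ * ((f₁ t - (1 / t ^ 2) * ∫ x in (0:ℝ)..t, x * f₁ x : ℝ) : ℂ) := by
  have h01 : (0:ℝ) ≤ 1 := by norm_num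
  have hσ1' : σ - 1 ≠ 0 := sub_ne_zero.mpr hσ1
  -- clamped version of f₁
  set fc : ℝ → ℝ := fun t => f₁ (min (max t 0) 1) with hfcdef
  have hmem : ∀ t : ℝ, min (max t 0) 1 ∈ Set.Icc (0:ℝ) 1 := fun t =>
    ⟨le_min (le_max_right _ _) zero_le_one, min_le_right _ _⟩
  have fc_cont : Continuous fc :=
    hf₁.comp_continuous ((continuous_id.max continuous_const).min continuous_const) hmem
  have fc_eq : ∀ t ∈ Set.Icc (0:ℝ) 1, fc t = f₁ t := by
    intro t ht
    simp only [hfcdef]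
    rw [max_eq_left ht.1, min_eq_left ht.2]
  obtain ⟨C, hC⟩ : ∃ C, ∀ y ∈ Set.Icc (0:ℝ) 1, ‖f₁ y‖ ≤ C :=
    isCompact_Icc.exists_bound_of_continuousOn hf₁
  have hC0 : 0 ≤ C := le_trans (norm_nonneg _) (hC 0 (by norm_num))
  have fc_bd : ∀ t : ℝ, |fc t| ≤ C := fun t => hC _ (hmem t)
  -- the primitive G
  set G : ℝ → ℝ := fun t => ∫ x in (0:ℝ)..t, x * fc x with hGdef
  have hxfc : Continuous fun x : ℝ => x * fc x := continuous_id.mul fc_cont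
  have hGcont : Continuous G :=
    intervalIntegral.continuous_primitive (fun a b => hxfc.intervalIntegrable a b) 0
  have hGf : ∀ t ∈ Set.Icc (0:ℝ) 1, G t = ∫ x in (0:ℝ)..t, x * f₁ x := by
    intro t ht
    apply intervalIntegral.integral_congr
    intro x hx
    rw [Set.uIcc_of_le ht.1] at hx
    show x * fc x = x * f₁ x
    rw [fc_eq x ⟨hx.1, le_trans hx.2 ht.2⟩]
  have hG1 : G 1 = 1 := by
    rw [hGf 1 ⟨h01, le_refl 1⟩, hnorm]
  have hGd : ∀ t : ℝ, HasDerivAt G (t * fc t) t := fun t =>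
    intervalIntegral.integral_hasDerivAt_right (hxfc.intervalIntegrable _ _)
      hxfc.stronglyMeasurable.stronglyMeasurableAtFilter hxfc.continuousAt
  have hGb : ∀ t ∈ Set.Ioc (0:ℝ) 1, |G t| ≤ C * t ^ (2:ℝ) := by
    intro t ht
    have h1 : |G t| ≤ ∫ x in (0:ℝ)..t, |x * fc x| :=
      intervalIntegral.abs_integral_le_integral_abs ht.1.le
    have h2 : (∫ x in (0:ℝ)..t, |x * fc x|) ≤ ∫ x in (0:ℝ)..t, C * x := by
      apply intervalIntegral.integral_mono_on ht.1.le
      · exact (continuous_abs.comp hxfc).intervalIntegrable _ _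
      · exact (continuous_const.mul continuous_id).intervalIntegrable _ _
      · intro x hx
        rw [abs_mul, abs_of_nonneg hx.1]
        calc x * |fc x| ≤ x * C := mul_le_mul_of_nonneg_left (fc_bd x) hx.1
          _ = C * x := mul_comm _ _
    have h3 : (∫ x in (0:ℝ)..t, C * x) = C * (t ^ 2 / 2) := by
      rw [intervalIntegral.integral_const_mul, integral_id]; ring
    have h4 : C * (t ^ 2 / 2) ≤ C * t ^ (2:ℝ) := by
      rw [show t ^ (2:ℝ) = t ^ (2:ℕ) by rw [← Real.rpow_natCast t 2]; norm_num]
      apply mul_le_mul_of_nonneg_left _ hC0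
      nlinarith [sq_nonneg t]
    linarith [le_trans h1 (le_trans h2 (le_of_eq h3)), h4]
  -- the function h and its antiderivative Φ on (0, ∞)
  set Φ : ℝ → ℂ := fun t => (t:ℂ) ^ (σ-1) / (σ-1) * ((G t : ℝ) : ℂ) with hΦdef
  set g₁ : ℝ → ℂ := fun t => (t:ℂ) ^ (σ-2) * ((G t : ℝ) : ℂ) with hg₁def
  set g₂ : ℝ → ℂ := fun t => (t:ℂ) ^ (σ-1) / (σ-1) * ((t * fc t : ℝ) : ℂ) with hg₂def
  set h : ℝ → ℂ := fun t => g₁ t + g₂ t with hhdef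
  have hΦd : ∀ t : ℝ, t ≠ 0 → HasDerivAt Φ (h t) t := by
    intro t ht
    have h1 : HasDerivAt (fun y : ℝ => (y:ℂ) ^ (σ-1) / (σ-1)) ((t:ℂ) ^ (σ-2)) t := by
      have hr : σ - 2 ≠ -1 := by
        intro hcon; apply hσ1; linear_combination hcon
      have := hasDerivAt_ofReal_cpow_const' ht hr
      rwa [show σ - 2 + 1 = σ - 1 by ring] at this
    have h2 : HasDerivAt (fun y : ℝ => ((G y : ℝ) : ℂ)) (((t * fc t : ℝ)) : ℂ) t :=
      (hGd t).ofReal_comp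
    simpa [hhdef, hg₁def, hg₂def, hΦdef, Pi.mul_def] using h1.mul h2
  -- continuity on (0,1]
  have hcpow : ∀ (c : ℂ), ContinuousOn (fun y : ℝ => (y:ℂ) ^ c) (Set.Ioc (0:ℝ) 1) := by
    intro c t ht
    exact (Complex.continuousAt_ofReal_cpow_const t c (Or.inr (ne_of_gt ht.1))).continuousWithinAt
  have hg₁cont : ContinuousOn g₁ (Set.Ioc 0 1) :=
    (hcpow (σ-2)).mul (Complex.continuous_ofReal.comp hGcont).continuousOn
  have hg₂cont : ContinuousOn g₂ (Set.Ioc 0 1) :=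
    ((hcpow (σ-1)).div_const _).mul (Complex.continuous_ofReal.comp hxfc).continuousOn
  have hhcont : ContinuousOn h (Set.Ioc 0 1) := hg₁cont.add hg₂cont
  -- norm computations
  have hnormcpow : ∀ (c : ℂ) (t : ℝ), t ∈ Set.Ioc (0:ℝ) 1 → ‖(t:ℂ) ^ c‖ = t ^ c.re := by
    intro c t ht
    rw [Complex.norm_cpow_eq_rpow_re_of_pos ht.1]
  have hre2 : (σ - 2).re = σ.re - 2 := by simp
  have hre1 : (σ - 1).re = σ.re - 1 := by simp
  have hg₁bd : ∀ t ∈ Set.Ioc (0:ℝ) 1, ‖g₁ t‖ ≤ C * t ^ σ.re := by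
    intro t ht
    simp only [hg₁def]
    rw [norm_mul, hnormcpow _ t ht, hre2, Complex.norm_real, Real.norm_eq_abs]
    calc t ^ (σ.re - 2) * |G t| ≤ t ^ (σ.re - 2) * (C * t ^ (2:ℝ)) :=
          mul_le_mul_of_nonneg_left (hGb t ht) (Real.rpow_nonneg ht.1.le _)
      _ = C * (t ^ (σ.re - 2) * t ^ (2:ℝ)) := by ring
      _ = C * t ^ σ.re := by
          rw [← Real.rpow_add ht.1]; norm_num
  have hg₂bd : ∀ t ∈ Set.Ioc (0:ℝ) 1, ‖g₂ t‖ ≤ C / ‖σ - 1‖ * t ^ σ.re := by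
    intro t ht
    simp only [hg₂def]
    rw [norm_mul, norm_div, hnormcpow _ t ht, hre1, Complex.norm_real, Real.norm_eq_abs,
      abs_mul, abs_of_pos ht.1]
    have habs : t * |fc t| ≤ t * C := mul_le_mul_of_nonneg_left (fc_bd t) ht.1.le
    calc t ^ (σ.re - 1) / ‖σ - 1‖ * (t * |fc t|)
        ≤ t ^ (σ.re - 1) / ‖σ - 1‖ * (t * C) := by
          apply mul_le_mul_of_nonneg_left habs
          exact div_nonneg (Real.rpow_nonneg ht.1.le _) (norm_nonneg _)
      _ = C / ‖σ - 1‖ * (t ^ (σ.re - 1) * t ^ (1:ℝ)) := by rw [Real.rpow_one]; ring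
      _ = C / ‖σ - 1‖ * t ^ σ.re := by
          rw [← Real.rpow_add ht.1]; norm_num
  have hg₁int : IntervalIntegrable g₁ volume 0 1 := aux_integrable hg₁cont hσ hg₁bd
  have hg₂int : IntervalIntegrable g₂ volume 0 1 := aux_integrable hg₂cont hσ hg₂bd
  have hhint : IntervalIntegrable h volume 0 1 := hg₁int.add hg₂int
  -- FTC on [a, 1]
  have key : ∀ a ∈ Set.Ioc (0:ℝ) 1, ∫ t in a..1, h t = Φ 1 - Φ a := by
    intro a ha
    apply intervalIntegral.integral_eq_sub_of_hasDerivAt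
    · intro t ht
      rw [Set.uIcc_of_le ha.2] at ht
      exact hΦd t (ne_of_gt (lt_of_lt_of_le ha.1 ht.1))
    · apply (hhcont.mono ?_).intervalIntegrable
      rw [Set.uIcc_of_le ha.2]
      exact fun x hx => ⟨lt_of_lt_of_le ha.1 hx.1, hx.2⟩
  -- limits along 𝓝[Ioc 0 1] 0
  have hne : Filter.NeBot (nhdsWithin (0:ℝ) (Set.Ioc 0 1)) := by
    apply mem_closure_iff_nhdsWithin_neBot.mp
    rw [closure_Ioc (by norm_num : (0:ℝ) ≠ 1)]
    exact ⟨le_refl 0, h01⟩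
  have l1 : Tendsto (fun a => ∫ t in a..1, h t) (nhdsWithin 0 (Set.Ioc 0 1))
      (nhds (∫ t in (0:ℝ)..1, h t)) := by
    have hio : IntegrableOn h (Set.uIcc (0:ℝ) 1) volume := by
      rw [Set.uIcc_of_le h01, integrableOn_Icc_iff_integrableOn_Ioc]
      exact hhint.1
    have hcw := intervalIntegral.continuousOn_primitive_interval_left (f := h)
      (μ := volume) (a := 0) (b := 1) hio
    have := hcw 0 (by rw [Set.uIcc_of_le h01]; exact ⟨le_refl 0, h01⟩)
    exact this.tendsto.mono_left (nhdsWithin_mono _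
      (by rw [Set.uIcc_of_le h01]; exact Set.Ioc_subset_Icc_self))
  have lΦ : Tendsto Φ (nhdsWithin 0 (Set.Ioc 0 1)) (nhds 0) := by
    have hb : ∀ᶠ a in nhdsWithin (0:ℝ) (Set.Ioc 0 1),
        ‖Φ a‖ ≤ C / ‖σ - 1‖ * a ^ (σ.re + 1) := by
      filter_upwards [eventually_mem_nhdsWithin] with a ha
      simp only [hΦdef]
      rw [norm_mul, norm_div, hnormcpow _ a ha, hre1, Complex.norm_real, Real.norm_eq_abs]
      calc a ^ (σ.re - 1) / ‖σ - 1‖ * |G a|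
          ≤ a ^ (σ.re - 1) / ‖σ - 1‖ * (C * a ^ (2:ℝ)) := by
            apply mul_le_mul_of_nonneg_left (hGb a ha)
            exact div_nonneg (Real.rpow_nonneg ha.1.le _) (norm_nonneg _)
        _ = C / ‖σ - 1‖ * (a ^ (σ.re - 1) * a ^ (2:ℝ)) := by ring
        _ = C / ‖σ - 1‖ * a ^ (σ.re + 1) := by
            rw [← Real.rpow_add ha.1, show σ.re - 1 + 2 = σ.re + 1 by ring]
    refine squeeze_zero_norm' hb ?_
    · have hct : ContinuousAt (fun a : ℝ => a ^ (σ.re + 1)) 0 :=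
        Real.continuousAt_rpow_const 0 _ (Or.inr (by linarith))
      have h0 : (0:ℝ) ^ (σ.re + 1) = 0 := Real.zero_rpow (by linarith)
      have := (hct.tendsto.mono_left (nhdsWithin_le_nhds (s := Set.Ioc (0:ℝ) 1))).const_mul
        (C / ‖σ - 1‖)
      rw [h0, mul_zero] at this
      exact this
  have l2 : Tendsto (fun a => ∫ t in a..1, h t) (nhdsWithin 0 (Set.Ioc 0 1)) (nhds (Φ 1)) := by
    have := (tendsto_const_nhds (x := Φ 1)
      (f := nhdsWithin (0:ℝ) (Set.Ioc 0 1))).sub lΦ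
    rw [sub_zero] at this
    apply this.congr'
    filter_upwards [eventually_mem_nhdsWithin] with a ha
    exact (key a ha).symm
  have hΦ1 : Φ 1 = 1 / (σ - 1) := by
    rw [hΦdef]
    simp [hG1, Complex.one_cpow]
  have hIh : ∫ t in (0:ℝ)..1, h t = 1 / (σ - 1) := by
    rw [← hΦ1]; exact tendsto_nhds_unique l1 l2
  -- split the integral of h
  have hF : ∫ t in (0:ℝ)..1, g₂ t
      = (σ - 1)⁻¹ * ∫ t in (0:ℝ)..1, (t : ℂ) ^ σ * (f₁ t : ℂ) := by
    rw [← intervalIntegral.integral_const_mul]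
    apply intervalIntegral.integral_congr_ae
    apply MeasureTheory.ae_of_all
    intro t ht
    rw [Set.uIoc_of_le h01] at ht
    have ht0 : (t:ℂ) ≠ 0 := by exact_mod_cast ne_of_gt ht.1
    have hfc : fc t = f₁ t := fc_eq t ⟨ht.1.le, ht.2⟩
    simp only [hg₂def]
    have hσt : (t:ℂ) ^ σ = (t:ℂ) ^ (σ - 1) * (t:ℂ) := by
      have hh := Complex.cpow_add (σ-1) 1 ht0
      rw [Complex.cpow_one, show σ - 1 + 1 = σ by ring] at hh
      exact hh
    push_cast
    rw [hfc, hσt]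
    field_simp
  have hsplit : (∫ t in (0:ℝ)..1, g₁ t)
      + (σ - 1)⁻¹ * (∫ t in (0:ℝ)..1, (t : ℂ) ^ σ * (f₁ t : ℂ)) = 1 / (σ - 1) := by
    rw [← hF, ← intervalIntegral.integral_add hg₁int hg₂int]
    exact hIh
  -- integrability of t^σ f₁ t
  have hfcont : ContinuousOn (fun t : ℝ => (t:ℂ) ^ σ * (f₁ t : ℂ)) (Set.Ioc 0 1) :=
    (hcpow σ).mul ((Complex.continuous_ofReal.comp_continuousOn
      (hf₁.mono Set.Ioc_subset_Icc_self)))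
  have hfbd : ∀ t ∈ Set.Ioc (0:ℝ) 1, ‖(t:ℂ) ^ σ * (f₁ t : ℂ)‖ ≤ C * t ^ σ.re := by
    intro t ht
    rw [norm_mul, hnormcpow _ t ht, Complex.norm_real]
    calc t ^ σ.re * ‖f₁ t‖ ≤ t ^ σ.re * C :=
        mul_le_mul_of_nonneg_left (hC t ⟨ht.1.le, ht.2⟩) (Real.rpow_nonneg ht.1.le _)
      _ = C * t ^ σ.re := mul_comm _ _
  have hfint : IntervalIntegrable (fun t : ℝ => (t:ℂ) ^ σ * (f₁ t : ℂ)) volume 0 1 :=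
    aux_integrable hfcont hσ hfbd
  -- rewrite the RHS
  have hRHS : (∫ t in (0:ℝ)..1,
        (t : ℂ) ^ σ * ((f₁ t - (1 / t ^ 2) * ∫ x in (0:ℝ)..t, x * f₁ x : ℝ) : ℂ))
      = (∫ t in (0:ℝ)..1, (t : ℂ) ^ σ * (f₁ t : ℂ)) - ∫ t in (0:ℝ)..1, g₁ t := by
    rw [← intervalIntegral.integral_sub hfint hg₁int]
    apply intervalIntegral.integral_congr_ae
    apply MeasureTheory.ae_of_all
    intro t ht
    rw [Set.uIoc_of_le h01] at ht
    have ht0 : (t:ℂ) ≠ 0 := by exact_mod_cast ne_of_gt ht.1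
    simp only [hg₁def]
    rw [← hGf t ⟨ht.1.le, ht.2⟩]
    have hc2 : (t:ℂ) ^ (σ - 2) = (t:ℂ) ^ σ / (t:ℂ) ^ (2:ℕ) := by
      rw [Complex.cpow_sub _ _ ht0, show ((2:ℂ)) = ((2:ℕ):ℂ) by norm_num,
        Complex.cpow_natCast]
    rw [hc2]
    have ht2 : ((t:ℝ) ^ 2 : ℝ) ≠ 0 := pow_ne_zero 2 (ne_of_gt ht.1)
    push_cast
    field_simp
  rw [hRHS]
  have hJ : (∫ t in (0:ℝ)..1, g₁ t)
      = 1 / (σ - 1) - (σ - 1)⁻¹ * (∫ t in (0:ℝ)..1, (t : ℂ) ^ σ * (f₁ t : ℂ)) := by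
    linear_combination hsplit
  rw [hJ]
  field_simp
  ring
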